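/- Let A be a quantitative Σ-algebra. (1) For every surjective nonexpansive Σ-homomorphism e : A → B of quantitative Σ-algebras, the map p_e(a, a') := d_B(e(a), e(a')) is a congruence on A. (2) Every congruence p on A equals p_e for some surjective nonexpansive Σ-homomorphism e with domain A. (3) Homomorphism theorem: for a surjective nonexpansive Σ-homomorphism e : A → B and an arbitrary nonexpansive Σ-homomorphism f : A → C, there exists a nonexpansive Σ-homomorphism g : B → C with f = g ∘ e if and only if d_C(f(a), f(a')) ≤ d_B(e(a), e(a')) for all a, a' ∈ A. -/

import Mathlib

open ENNReal

universe u

/-- Σ-terms over a set `X` of variables, for the signature with operation symbols `S`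
and arity function `ar`. -/
inductive Term (S : Type u) (ar : S → ℕ) (X : Type u) : Type u
  | var : X → Term S ar X
  | op : (s : S) → (Fin (ar s) → Term S ar X) → Term S ar X

/-- A quantitative Σ-algebra: an extended metric space (distances in `[0,∞]`) with
Σ-operations that are nonexpansive with respect to the sup-metric. -/
structure QAlg (S : Type u) (ar : S → ℕ) : Type (u + 1) where
  carrier : Type u
  d : carrier → carrier → ℝ≥0∞
  d_eq_zero : ∀ a b : carrier, d a b = 0 ↔ a = b
  d_symm : ∀ a b : carrier, d a b = d b a
  d_triangle : ∀ a b c : carrier, d a c ≤ d a b + d b c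
  op : (s : S) → (Fin (ar s) → carrier) → carrier
  op_nonexpansive : ∀ (s : S) (v w : Fin (ar s) → carrier),
      d (op s v) (op s w) ≤ ⨆ i, d (v i) (w i)

variable {S : Type u} {ar : S → ℕ}

/-- The unique homomorphic extension `h#` of `h : X → A` to the term algebra. -/
def QAlg.eval (A : QAlg S ar) {X : Type u} (h : X → A.carrier) :
    Term S ar X → A.carrier
  | Term.var x => h x
  | Term.op s v => A.op s fun i => A.eval h (v i)

/-- A nonexpansive Σ-homomorphism of quantitative Σ-algebras. -/
def QHom (A B : QAlg S ar) (f : A.carrier → B.carrier) : Prop :=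
  (∀ (s : S) (v : Fin (ar s) → A.carrier), f (A.op s v) = B.op s fun i => f (v i)) ∧
  (∀ a a' : A.carrier, B.d (f a) (f a') ≤ A.d a a')

/-- A congruence on a quantitative Σ-algebra `A`: an extended pseudometric below the
metric of `A` making all Σ-operations nonexpansive. -/
def IsCongruence (A : QAlg S ar) (p : A.carrier → A.carrier → ℝ≥0∞) : Prop :=
  (∀ a, p a a = 0) ∧ (∀ a b, p a b = p b a) ∧ (∀ a b c, p a c ≤ p a b + p b c) ∧
  (∀ a b, p a b ≤ A.d a b) ∧
  (∀ (s : S) (v w : Fin (ar s) → A.carrier),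
      p (A.op s v) (A.op s w) ≤ ⨆ i, p (v i) (w i))

/-- Exactness for quantitative Σ-algebras: (1) the kernel pseudometric `p_e` of a
surjective nonexpansive Σ-homomorphism `e` is a congruence; (2) every congruence
arises this way; (3) homomorphism theorem: `f` factors through a surjective `e` iff
`d_C(f a, f a') ≤ d_B(e a, e a')` for all `a, a'`. -/
theorem quantitative_congruence_correspondence (S : Type u) (ar : S → ℕ)
    (A : QAlg S ar) :
    (∀ (B : QAlg S ar) (e : A.carrier → B.carrier), QHom A B e → Function.Surjective e →
      IsCongruence A fun a a' => B.d (e a) (e a')) ∧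
    (∀ p : A.carrier → A.carrier → ℝ≥0∞, IsCongruence A p →
      ∃ (B : QAlg S ar) (e : A.carrier → B.carrier), QHom A B e ∧ Function.Surjective e ∧
        ∀ a a', p a a' = B.d (e a) (e a')) ∧
    (∀ (B C : QAlg S ar) (e : A.carrier → B.carrier) (f : A.carrier → C.carrier),
      QHom A B e → Function.Surjective e → QHom A C f →
      ((∃ g : B.carrier → C.carrier, QHom B C g ∧ ∀ a, g (e a) = f a) ↔
        ∀ a a', C.d (f a) (f a') ≤ B.d (e a) (e a'))) := by
  classical
  refine ⟨?_, ?_, ?_⟩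
  · rintro B e ⟨hop, hne⟩ _
    refine ⟨fun a => by simp [B.d_eq_zero], fun a b => B.d_symm _ _,
      fun a b c => B.d_triangle _ _ _, fun a b => hne a b, ?_⟩
    intro s v w
    calc B.d (e (A.op s v)) (e (A.op s w))
        = B.d (B.op s fun i => e (v i)) (B.op s fun i => e (w i)) := by rw [hop, hop]
      _ ≤ ⨆ i, B.d (e (v i)) (e (w i)) := B.op_nonexpansive _ _ _
  · rintro p ⟨hrefl, hsymm, htri, hle, hopp⟩
    have hsy : ∀ {a b : A.carrier}, p a b = 0 → p b a = 0 := by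
      intro a b h; rw [hsymm]; exact h
    have htr : ∀ {a b c : A.carrier}, p a b = 0 → p b c = 0 → p a c = 0 := by
      intro a b c h1 h2
      refine le_antisymm ?_ zero_le
      calc p a c ≤ p a b + p b c := htri a b c
        _ = 0 := by rw [h1, h2, add_zero]
    let st : Setoid A.carrier := ⟨fun a b => p a b = 0,
      ⟨hrefl, fun h => hsy h, fun h1 h2 => htr h1 h2⟩⟩
    have pcong : ∀ {a a' b b' : A.carrier}, p a a' = 0 → p b b' = 0 →
        p a b = p a' b' := by
      intro a a' b b' h1 h2
      have key : ∀ {x x' y y' : A.carrier}, p x x' = 0 → p y y' = 0 →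
          p x' y' ≤ p x y := by
        intro x x' y y' hx hy
        calc p x' y' ≤ p x' x + p x y' := htri _ _ _
          _ ≤ p x' x + (p x y + p y y') := by gcongr; exact htri _ _ _
          _ = p x y := by rw [hsymm x' x, hx, hy, zero_add, add_zero]
      exact le_antisymm (key (hsy h1) (hsy h2)) (key h1 h2)
    have hout : ∀ a : A.carrier, p (Quotient.out (Quotient.mk st a)) a = 0 :=
      fun a => Quotient.mk_out a
    refine ⟨⟨Quotient st, fun q q' => p q.out q'.out, ?_, fun q q' => hsymm _ _,
      fun q q' q'' => htri _ _ _,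
      fun s v => Quotient.mk st (A.op s fun i => (v i).out), ?_⟩,
      Quotient.mk st, ⟨?_, ?_⟩, ?_, ?_⟩
    · intro q q'
      constructor
      · intro h
        rw [← Quotient.out_eq q, ← Quotient.out_eq q']
        exact Quotient.sound h
      · rintro rfl; exact hrefl _
    · intro s v w
      have := pcong (hout (A.op s fun i => (v i).out)) (hout (A.op s fun i => (w i).out))
      rw [this]
      exact hopp s _ _
    · intro s v
      refine Quotient.sound ?_
      have : p (A.op s v) (A.op s fun i => (Quotient.mk st (v i)).out)
          ≤ ⨆ i, p (v i) ((Quotient.mk st (v i)).out) := hopp s _ _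
      refine le_antisymm ?_ zero_le
      refine this.trans ?_
      simp only [fun i => hsy (hout (v i))]
      simp
    · intro a a'
      have := pcong (hout a) (hout a')
      exact this.le.trans (hle a a')
    · intro q
      exact ⟨q.out, Quotient.out_eq q⟩
    · intro a a'
      exact (pcong (hout a) (hout a')).symm
  · rintro B C e f ⟨heop, hene⟩ hsurj ⟨hfop, hfne⟩
    constructor
    · rintro ⟨g, ⟨_, hgne⟩, hgf⟩ a a'
      rw [← hgf a, ← hgf a']
      exact hgne _ _
    · intro hd
      have hker : ∀ a a', e a = e a' → f a = f a' := by
        intro a a' h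
        have := hd a a'
        rw [h] at this
        simp only [(B.d_eq_zero _ _).mpr rfl, nonpos_iff_eq_zero] at this
        exact (C.d_eq_zero _ _).mp this
      set g : B.carrier → C.carrier := fun b => f (Function.surjInv hsurj b) with hg
      have hge : ∀ a, g (e a) = f a := by
        intro a
        exact hker _ _ (Function.surjInv_eq hsurj (e a))
      refine ⟨g, ⟨?_, ?_⟩, hge⟩
      · intro s v
        have hv : ∀ i, e (Function.surjInv hsurj (v i)) = v i :=
          fun i => Function.surjInv_eq hsurj (v i)
        calc g (B.op s v)
            = g (B.op s fun i => e (Function.surjInv hsurj (v i))) := by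
              simp only [hv]
          _ = g (e (A.op s fun i => Function.surjInv hsurj (v i))) := by rw [heop]
          _ = f (A.op s fun i => Function.surjInv hsurj (v i)) := hge _
          _ = C.op s fun i => f (Function.surjInv hsurj (v i)) := hfop _ _
          _ = C.op s fun i => g (v i) := rfl
      · intro b b'
        have hb := Function.surjInv_eq hsurj b
        have hb' := Function.surjInv_eq hsurj b'
        calc C.d (g b) (g b') = C.d (f (Function.surjInv hsurj b)) (f (Function.surjInv hsurj b')) := rfl
          _ ≤ B.d (e (Function.surjInv hsurj b)) (e (Function.surjInv hsurj b')) := hd _ _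
          _ = B.d b b' := by rw [hb, hb']
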